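/- One step of the optimistic gradient scheme satisfies ‖z_{k+1} - z*‖² ≤ (1 - ηm)‖z_k - z*‖² - (1 - 2ηm)‖z_{k+1/2} - z_k‖² + η²L²‖z_{k+1/2} - z_{k-1/2}‖². -/
import Mathlib


open RealInnerProductSpace

theorem stmt_8 (d : ℕ) (m L η : ℝ) (hm : 0 < m) (hmL : m ≤ L) (hη : 0 < η)
    (F : EuclideanSpace ℝ (Fin d) → EuclideanSpace ℝ (Fin d))
    (hmono : ∀ z₁ z₂, ⟪F z₁ - F z₂, z₁ - z₂⟫ ≥ m * ‖z₁ - z₂‖ ^ 2)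
    (hlip : ∀ z₁ z₂, ‖F z₁ - F z₂‖ ≤ L * ‖z₁ - z₂‖)
    (zs : EuclideanSpace ℝ (Fin d)) (hzs : F zs = 0)
    (zk zhalfprev zhalf znext : EuclideanSpace ℝ (Fin d))
    (hhalf : zhalf = zk - η • F zhalfprev)
    (hfull : znext = zk - η • F zhalf) :
    ‖znext - zs‖ ^ 2 ≤ (1 - η * m) * ‖zk - zs‖ ^ 2
      - (1 - 2 * η * m) * ‖zhalf - zk‖ ^ 2
      + η ^ 2 * L ^ 2 * ‖zhalf - zhalfprev‖ ^ 2 := by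
  set u := zk - zs with hu
  set w := zhalf - zk with hw
  set e := η • (F zhalf - F zhalfprev) with he
  have hznext : znext - zs = (u + w) - e := by
    rw [hfull, hu, hw, he, hhalf]; module
  have hew : e - w = η • F zhalf := by
    rw [he, hw, hhalf]; module
  have huw : u + w = zhalf - zs := by rw [hu, hw]; abel
  -- monotonicity
  have hmono' : ⟪e - w, u + w⟫ ≥ η * m * ‖u + w‖ ^ 2 := by
    rw [hew, huw, real_inner_smul_left]
    have := hmono zhalf zs
    rw [hzs, sub_zero] at this
    have : η * ⟪F zhalf, zhalf - zs⟫ ≥ η * (m * ‖zhalf - zs‖ ^ 2) :=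
      mul_le_mul_of_nonneg_left this hη.le
    linarith [this]
  -- Lipschitz bound
  have hlip' : ‖e‖ ^ 2 ≤ η ^ 2 * L ^ 2 * ‖zhalf - zhalfprev‖ ^ 2 := by
    have h1 : ‖e‖ = η * ‖F zhalf - F zhalfprev‖ := by
      rw [he, norm_smul, Real.norm_eq_abs, abs_of_pos hη]
    have h2 := hlip zhalf zhalfprev
    have h3 : (0:ℝ) ≤ L * ‖zhalf - zhalfprev‖ :=
      mul_nonneg (le_trans hm.le hmL) (norm_nonneg _)
    rw [h1]
    calc (η * ‖F zhalf - F zhalfprev‖) ^ 2 = η ^ 2 * ‖F zhalf - F zhalfprev‖ ^ 2 := by ring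
      _ ≤ η ^ 2 * (L * ‖zhalf - zhalfprev‖) ^ 2 := by
          gcongr
      _ = η ^ 2 * L ^ 2 * ‖zhalf - zhalfprev‖ ^ 2 := by ring
  -- expansions
  have h1 : ‖(u + w) - e‖ ^ 2 = ‖u + w‖ ^ 2 - 2 * ⟪u + w, e⟫ + ‖e‖ ^ 2 :=
    norm_sub_sq_real _ _
  have h2 : ‖u‖ ^ 2 = ‖u + w‖ ^ 2 - 2 * ⟪u + w, w⟫ + ‖w‖ ^ 2 := by
    have h := norm_sub_sq_real (u + w) w
    rwa [add_sub_cancel_right] at h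
  have h4 : (0:ℝ) ≤ ‖u + w‖ ^ 2 + 2 * ⟪u + w, w⟫ + ‖w‖ ^ 2 := by
    have := norm_add_sq_real (u + w) w
    nlinarith [sq_nonneg ‖(u + w) + w‖]
  have hsplit : ⟪e - w, u + w⟫ = ⟪e, u + w⟫ - ⟪w, u + w⟫ := by
    rw [inner_sub_left]
  have hcomm1 : ⟪u + w, e⟫ = ⟪e, u + w⟫ := real_inner_comm _ _
  have hcomm2 : ⟪u + w, w⟫ = ⟪w, u + w⟫ := real_inner_comm _ _
  have hηm : (0:ℝ) ≤ η * m := (mul_pos hη hm).le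
  have key1 : (0:ℝ) ≤ η * m * (‖u + w‖ ^ 2 + 2 * ⟪u + w, w⟫ + ‖w‖ ^ 2) :=
    mul_nonneg hηm h4
  have key2 : η * m * ‖u‖ ^ 2
      = η * m * (‖u + w‖ ^ 2 - 2 * ⟪u + w, w⟫ + ‖w‖ ^ 2) := by rw [h2]
  have hmono'' : ⟪u + w, e⟫ - ⟪u + w, w⟫ ≥ η * m * ‖u + w‖ ^ 2 := by
    rw [hcomm1, hcomm2]
    linarith [hmono', hsplit.symm.le, hsplit.le]
  rw [hznext, h1]
  linarith [key1, key2, hmono'', hlip', h2]
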